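/- Ranking-Supermartingale Rule (adapted from Chakarov–Sankaranarayanan and Fioriti–Hermanns): Let (M_n)_{n∈ℕ} be an adapted, integrable real-valued process on a filtered probability space and T a stopping time. Suppose there is ε > 0 such that for every n ∈ ℕ: (i) M_n > 0 P-almost everywhere on the event {T > n}; (ii) the stopped variable M_{min(n,T)} ≥ 0 P-almost surely; and (iii) E(M_{n+1} | ℱ_n) ≤ M_n − ε P-almost everywhere on {T > n}. Then E(T) ≤ E(M_0)/ε; in particular E(T) < ∞ (positive almost sure termination). -/

import Mathlib

open MeasureTheory Filter
open scoped ENNReal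

/-- **Ranking-Supermartingale Rule.** If `(M n)` is an adapted integrable process, `T` a
stopping time, and for some `ε > 0` the process is positive on `{T > n}`, nonnegative when
stopped, and decreases in conditional expectation by at least `ε` on `{T > n}`, then
`E(T) ≤ E(M 0) / ε`; in particular `E(T) < ∞` (positive almost sure termination). -/
theorem ranking_supermartingale_rule
    {Ω : Type*} {mΩ : MeasurableSpace Ω} {P : Measure Ω} [IsProbabilityMeasure P]
    (ℱ : Filtration ℕ mΩ) (M : ℕ → Ω → ℝ) (T : Ω → ℕ∞)
    (hAdapted : Adapted ℱ M) (hInt : ∀ n, Integrable (M n) P)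
    (hStop : ∀ n : ℕ, MeasurableSet[ℱ n] {ω | T ω ≤ (n : ℕ∞)})
    (ε : ℝ) (hε : 0 < ε)
    (hPos : ∀ n : ℕ, ∀ᵐ ω ∂P, (n : ℕ∞) < T ω → 0 < M n ω)
    (hStopNonneg : ∀ n : ℕ, ∀ᵐ ω ∂P, 0 ≤ M (min (n : ℕ∞) (T ω)).toNat ω)
    (hDrift : ∀ n : ℕ, ∀ᵐ ω ∂P, (n : ℕ∞) < T ω →
      (P[M (n + 1)|ℱ n]) ω ≤ M n ω - ε) :
    (∫⁻ ω, (T ω : ℝ≥0∞) ∂P) ≤ ENNReal.ofReal ((∫ ω, M 0 ω ∂P) / ε) ∧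
      (∫⁻ ω, (T ω : ℝ≥0∞) ∂P) < ⊤ := by
  classical
  set S : ℕ → Ω → ℝ := fun n ω => M (min (n : ℕ∞) (T ω)).toNat ω with hS
  set A : ℕ → Set Ω := fun n => {ω | (n : ℕ∞) < T ω} with hA
  have hAmeas : ∀ n : ℕ, MeasurableSet[ℱ n] (A n) := by
    intro n
    have : A n = {ω | T ω ≤ (n : ℕ∞)}ᶜ := by
      ext ω; simp [hA, not_le]
    rw [this]
    exact (hStop n).compl
  have hAmeas' : ∀ n : ℕ, MeasurableSet (A n) := fun n => ℱ.le n _ (hAmeas n)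
  -- recursion for the stopped process
  have hSrec : ∀ (n : ℕ) (ω : Ω),
      S (n + 1) ω = if ω ∈ A n then M (n + 1) ω else S n ω := by
    intro n ω
    by_cases h : ω ∈ A n
    · have h1 : ((n + 1 : ℕ) : ℕ∞) ≤ T ω := by
        rw [Nat.cast_add, Nat.cast_one]
        exact Order.add_one_le_of_lt h
      have hmin : min ((n + 1 : ℕ) : ℕ∞) (T ω) = ((n + 1 : ℕ) : ℕ∞) :=
        min_eq_left h1
      rw [if_pos h]
      show M (min ((n + 1 : ℕ) : ℕ∞) (T ω)).toNat ω = M (n + 1) ω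
      rw [hmin, ENat.toNat_coe]
    · have h1 : T ω ≤ (n : ℕ∞) := not_lt.mp h
      have h2 : min ((n + 1 : ℕ) : ℕ∞) (T ω) = T ω := by
        apply min_eq_right
        exact h1.trans (by exact_mod_cast Nat.le_succ n)
      have h3 : min ((n : ℕ) : ℕ∞) (T ω) = T ω := min_eq_right h1
      rw [if_neg h]
      show M (min ((n + 1 : ℕ) : ℕ∞) (T ω)).toNat ω
          = M (min ((n : ℕ) : ℕ∞) (T ω)).toNat ω
      rw [h2, h3]
  have hSA : ∀ (n : ℕ) (ω : Ω), ω ∈ A n → S n ω = M n ω := by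
    intro n ω h
    have : min ((n : ℕ) : ℕ∞) (T ω) = (n : ℕ∞) := min_eq_left (le_of_lt h)
    simp [hS, this]
  have hS0 : S 0 = M 0 := by
    funext ω; simp [hS]
  -- integrability of S n
  have hSint : ∀ n, Integrable (S n) P := by
    intro n
    induction n with
    | zero => rw [hS0]; exact hInt 0
    | succ n ih =>
        have : S (n + 1) = (A n).piecewise (M (n + 1)) (S n) := by
          funext ω; rw [hSrec n ω]; simp [Set.piecewise]
        rw [this]
        exact Integrable.piecewise (hAmeas' n) (hInt (n + 1)).integrableOn ih.integrableOn
  -- key one-step inequality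
  have hkey : ∀ n : ℕ,
      ∫ ω, S (n + 1) ω ∂P ≤ ∫ ω, S n ω ∂P - ε * (P (A n)).toReal := by
    intro n
    have hsplit1 : ∫ ω, S (n + 1) ω ∂P
        = ∫ ω in A n, S (n + 1) ω ∂P + ∫ ω in (A n)ᶜ, S (n + 1) ω ∂P :=
      (integral_add_compl (hAmeas' n) (hSint (n + 1))).symm
    have hsplit2 : ∫ ω, S n ω ∂P
        = ∫ ω in A n, S n ω ∂P + ∫ ω in (A n)ᶜ, S n ω ∂P :=
      (integral_add_compl (hAmeas' n) (hSint n)).symm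
    have e1 : ∫ ω in A n, S (n + 1) ω ∂P = ∫ ω in A n, M (n + 1) ω ∂P :=
      setIntegral_congr_fun (hAmeas' n) (fun ω hω => by rw [hSrec n ω, if_pos hω])
    have e2 : ∫ ω in (A n)ᶜ, S (n + 1) ω ∂P = ∫ ω in (A n)ᶜ, S n ω ∂P :=
      setIntegral_congr_fun (hAmeas' n).compl
        (fun ω hω => by rw [hSrec n ω, if_neg hω])
    have e3 : ∫ ω in A n, S n ω ∂P = ∫ ω in A n, M n ω ∂P :=
      setIntegral_congr_fun (hAmeas' n) (fun ω hω => hSA n ω hω)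
    have e4 : ∫ ω in A n, M (n + 1) ω ∂P = ∫ ω in A n, (P[M (n + 1)|ℱ n]) ω ∂P :=
      (setIntegral_condExp (ℱ.le n) (hInt (n + 1)) (hAmeas n)).symm
    have e5 : ∫ ω in A n, (P[M (n + 1)|ℱ n]) ω ∂P
        ≤ ∫ ω in A n, (M n ω - ε) ∂P := by
      apply setIntegral_mono_ae_restrict
      · exact integrable_condExp.integrableOn
      · exact ((hInt n).sub (integrable_const ε)).integrableOn
      · rw [Filter.EventuallyLE, ae_restrict_iff' (hAmeas' n)]
        filter_upwards [hDrift n] with ω h hω using h hω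
    have e6 : ∫ ω in A n, (M n ω - ε) ∂P
        = ∫ ω in A n, M n ω ∂P - ε * (P (A n)).toReal := by
      rw [integral_sub (hInt n).integrableOn (integrable_const ε).integrableOn,
        setIntegral_const]
      simp [mul_comm, Measure.restrict_apply_univ, Measure.real]
    rw [hsplit1, hsplit2, e1, e2, e3]
    linarith [e4 ▸ (e6 ▸ e5)]
  have hSnonneg : ∀ n, 0 ≤ ∫ ω, S n ω ∂P := fun n =>
    integral_nonneg_of_ae (hStopNonneg n)
  -- summed inequality
  have hsum : ∀ n : ℕ,
      ε * ∑ k ∈ Finset.range n, (P (A k)).toReal ≤ ∫ ω, M 0 ω ∂P := by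
    intro n
    have : ∫ ω, S n ω ∂P + ε * ∑ k ∈ Finset.range n, (P (A k)).toReal
        ≤ ∫ ω, M 0 ω ∂P := by
      induction n with
      | zero => simp [hS0]
      | succ n ih =>
          have := hkey n
          rw [Finset.sum_range_succ]
          linarith
    linarith [hSnonneg n]
  have hsum' : ∀ n : ℕ,
      ∑ k ∈ Finset.range n, (P (A k)).toReal ≤ (∫ ω, M 0 ω ∂P) / ε := by
    intro n
    rw [le_div_iff₀ hε]
    linarith [hsum n]
  -- lintegral of T as a sum of tail probabilities
  have hTsum : ∀ ω : Ω, (T ω : ℝ≥0∞)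
      = ∑' n : ℕ, (A n).indicator (fun _ => (1 : ℝ≥0∞)) ω := by
    intro ω
    rcases eq_or_ne (T ω) ⊤ with h | h
    · have hmem : ∀ n : ℕ, (A n).indicator (fun _ => (1 : ℝ≥0∞)) ω = 1 := by
        intro n
        have : ω ∈ A n := by
          show (n : ℕ∞) < T ω
          rw [h]
          exact ENat.coe_lt_top n
        simp [Set.indicator_of_mem this]
      rw [tsum_congr hmem, ENNReal.tsum_const_eq_top_of_ne_zero one_ne_zero, h]
      rfl
    · set m : ℕ := (T ω).toNat with hmdef
      have hm : (m : ℕ∞) = T ω := ENat.coe_toNat h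
      have hind : ∀ n : ℕ, (A n).indicator (fun _ => (1 : ℝ≥0∞)) ω
          = if n < m then 1 else 0 := by
        intro n
        by_cases hn : n < m
        · have : ω ∈ A n := by
            show (n : ℕ∞) < T ω
            rw [← hm]
            exact_mod_cast hn
          simp [Set.indicator_of_mem this, hn]
        · have : ω ∉ A n := by
            show ¬ (n : ℕ∞) < T ω
            rw [← hm, not_lt]
            exact_mod_cast not_lt.mp hn
          simp [Set.indicator_of_notMem this, hn]
      rw [tsum_congr hind]
      rw [tsum_eq_sum (s := Finset.range m) (fun n hn => by
        rw [Finset.mem_range, not_lt] at hn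
        rw [if_neg (not_lt.mpr hn)])]
      rw [Finset.sum_congr rfl (fun n hn => if_pos (Finset.mem_range.mp hn))]
      rw [Finset.sum_const, Finset.card_range, nsmul_eq_mul, mul_one, ← hm,
        ENat.toENNReal_coe]
  have hlin : (∫⁻ ω, (T ω : ℝ≥0∞) ∂P) = ∑' n : ℕ, P (A n) := by
    calc (∫⁻ ω, (T ω : ℝ≥0∞) ∂P)
        = ∫⁻ ω, ∑' n : ℕ, (A n).indicator (fun _ => (1 : ℝ≥0∞)) ω ∂P := by
          exact lintegral_congr hTsum
      _ = ∑' n : ℕ, ∫⁻ ω, (A n).indicator (fun _ => (1 : ℝ≥0∞)) ω ∂P :=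
          lintegral_tsum fun n =>
            ((measurable_const.indicator (hAmeas' n))).aemeasurable
      _ = ∑' n : ℕ, P (A n) := by
          refine tsum_congr fun n => ?_
          rw [lintegral_indicator (hAmeas' n)]
          simp
  have hmain : (∫⁻ ω, (T ω : ℝ≥0∞) ∂P) ≤ ENNReal.ofReal ((∫ ω, M 0 ω ∂P) / ε) := by
    rw [hlin, ENNReal.tsum_eq_iSup_nat]
    refine iSup_le fun n => ?_
    have : ∑ k ∈ Finset.range n, P (A k)
        = ENNReal.ofReal (∑ k ∈ Finset.range n, (P (A k)).toReal) := by
      rw [ENNReal.ofReal_sum_of_nonneg fun k _ => ENNReal.toReal_nonneg]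
      exact Finset.sum_congr rfl fun k _ => (ENNReal.ofReal_toReal (measure_ne_top P _)).symm
    rw [this]
    exact ENNReal.ofReal_le_ofReal (hsum' n)
  exact ⟨hmain, lt_of_le_of_lt hmain ENNReal.ofReal_lt_top⟩
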